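/- The minimum of N ≥ 2 real numbers can be computed by a composition of pairwise-min gadgets arranged in a balanced binary tree of depth ⌈log₂ N⌉; since each pairwise min is a ReLU network of depth 2 and width 4 (by the two-layer ReLU identity for min), the N-ary minimum is exactly representable by a ReLU network of depth at most 2·⌈log₂ N⌉ and width at most 4·⌈N/2⌉. -/

import Mathlib

/-- Coordinatewise ReLU. -/
noncomputable def reluVec {d : ℕ} (x : Fin d → ℝ) : Fin d → ℝ := fun i => max 0 (x i)

/-- A ReLU network with input dimension `n` and scalar output: an input affine layer,
`depth` ReLU activations interleaved with affine layers of uniform `width`, and an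
affine output layer.  `depth` counts the number of ReLU layers and `width` the maximal
number of neurons in a layer. -/
structure ReLUNet (n : ℕ) where
  depth : ℕ
  width : ℕ
  inW : Matrix (Fin width) (Fin n) ℝ
  inB : Fin width → ℝ
  midW : ℕ → Matrix (Fin width) (Fin width) ℝ
  midB : ℕ → Fin width → ℝ
  outW : Fin width → ℝ
  outB : ℝ

/-- The hidden state after `k+1` ReLU layers. -/
noncomputable def ReLUNet.hidden {n : ℕ} (net : ReLUNet n) (x : Fin n → ℝ) :
    ℕ → (Fin net.width → ℝ)
  | 0 => reluVec (net.inW.mulVec x + net.inB)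
  | k + 1 => reluVec ((net.midW k).mulVec (net.hidden x k) + net.midB k)

/-- The output of the network: the affine output layer applied after `depth` ReLU
layers. -/
noncomputable def ReLUNet.eval {n : ℕ} (net : ReLUNet n) (x : Fin n → ℝ) : ℝ :=
  dotProduct net.outW (net.hidden x (net.depth - 1)) + net.outB

namespace MinRelu

/-- number of pairs per layer -/
def P (N : ℕ) : ℕ := (N + 1) / 2
/-- width -/
def W (N : ℕ) : ℕ := 4 * P N

/-- number of values alive at level `k` -/
def mm (N : ℕ) : ℕ → ℕ
  | 0 => N
  | k + 1 => (mm N k + 1) / 2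

lemma mm_pos {N : ℕ} (hN : 1 ≤ N) : ∀ k, 1 ≤ mm N k := by
  intro k; induction k with
  | zero => exact hN
  | succ k ih => simp only [mm]; omega

lemma mm_le_P {N : ℕ} (hN : 1 ≤ N) : ∀ k, mm N (k + 1) ≤ P N := by
  intro k; induction k with
  | zero => simp [mm, P]
  | succ k ih => have := mm_pos hN (k+1); simp only [mm] at *; omega

/-- extension of x to ℕ -/
noncomputable def xe {N : ℕ} (x : Fin N → ℝ) (i : ℕ) : ℝ :=
  if h : i < N then x ⟨i, h⟩ else 0

/-- the clamped balanced-tree min recursion -/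
noncomputable def u (N : ℕ) (x : Fin N → ℝ) : ℕ → ℕ → ℝ
  | 0, j => xe x (min j (N - 1))
  | k + 1, j =>
      min (u N x k (min (2 * j) (mm N k - 1))) (u N x k (min (2 * j + 1) (mm N k - 1)))

noncomputable def sg1 (t : ℕ) : ℝ := if t % 4 = 0 ∨ t % 4 = 1 then 1 else -1
noncomputable def sg2 (t : ℕ) : ℝ := if t % 4 = 0 ∨ t % 4 = 2 then 1 else -1

/-- coefficient vector that extracts the value stored in block `p` -/
noncomputable def coefV (N : ℕ) (p : ℕ) : Fin (W N) → ℝ :=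
  fun r => if (r : ℕ) / 4 = p then (if (r : ℕ) % 4 = 0 then (1:ℝ)/2 else -(1/2)) else 0

lemma min_relu (a b : ℝ) :
    min a b = (1/2)*max 0 (a+b) - (1/2)*max 0 (a-b) - (1/2)*max 0 (-a+b) - (1/2)*max 0 (-a-b) := by
  rcases le_total a b with h|h <;> rcases le_total 0 (a+b) with h2|h2 <;>
    simp [min_def, max_def] <;> split_ifs <;> nlinarith

lemma sum_coefV {N : ℕ} (p : ℕ) (hp : 4 * p + 3 < W N) (h : Fin (W N) → ℝ) :
    ∑ r, coefV N p r * h r =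
      (1/2) * h ⟨4*p, by omega⟩ - (1/2) * h ⟨4*p+1, by omega⟩
        - (1/2) * h ⟨4*p+2, by omega⟩ - (1/2) * h ⟨4*p+3, by omega⟩ := by
  have key : ∀ r : Fin (W N), coefV N p r * h r =
      (if r = (⟨4*p, by omega⟩ : Fin (W N)) then (1/2) * h r else 0)
      + (if r = (⟨4*p+1, by omega⟩ : Fin (W N)) then (-(1/2)) * h r else 0)
      + (if r = (⟨4*p+2, by omega⟩ : Fin (W N)) then (-(1/2)) * h r else 0)
      + (if r = (⟨4*p+3, by omega⟩ : Fin (W N)) then (-(1/2)) * h r else 0) := by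
    intro r
    simp only [coefV, Fin.ext_iff]
    split_ifs <;> first | ring1 | (exfalso; omega)
  rw [Finset.sum_congr rfl (fun r _ => key r)]
  simp only [Finset.sum_add_distrib, Finset.sum_ite_eq', Finset.mem_univ, if_true]
  ring

lemma sum_ind {N : ℕ} (A : ℕ) (hA : A < N) (x : Fin N → ℝ) :
    ∑ i : Fin N, (if (i : ℕ) = A then (1:ℝ) else 0) * x i = x ⟨A, hA⟩ := by
  have key : ∀ i : Fin N, (if (i : ℕ) = A then (1:ℝ) else 0) * x i =
      if i = (⟨A, hA⟩ : Fin N) then x i else 0 := by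
    intro i
    simp only [Fin.ext_iff]
    split_ifs <;> first | ring1 | (exfalso; omega)
  rw [Finset.sum_congr rfl (fun i _ => key i)]
  simp

variable (N : ℕ)

/-- The network computing the N-ary min. -/
noncomputable def net (hN : 2 ≤ N) : ReLUNet N where
  depth := Nat.clog 2 N
  width := W N
  inW := fun r i =>
    sg1 r * (if (i : ℕ) = min (2 * ((r : ℕ) / 4)) (N - 1) then 1 else 0)
    + sg2 r * (if (i : ℕ) = min (2 * ((r : ℕ) / 4) + 1) (N - 1) then 1 else 0)
  inB := 0
  midW := fun k r r' =>
    sg1 r * coefV N (min (2 * ((r : ℕ) / 4)) (mm N (k + 1) - 1)) r'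
    + sg2 r * coefV N (min (2 * ((r : ℕ) / 4) + 1) (mm N (k + 1) - 1)) r'
  midB := fun _ => 0
  outW := coefV N 0
  outB := 0


lemma sg1_0 (p : ℕ) : sg1 (4*p) = 1 := by
  have h : (4*p) % 4 = 0 := by omega
  simp [sg1, h]
lemma sg1_1 (p : ℕ) : sg1 (4*p+1) = 1 := by
  have h : (4*p+1) % 4 = 1 := by omega
  simp [sg1, h]
lemma sg1_2 (p : ℕ) : sg1 (4*p+2) = -1 := by
  have h : (4*p+2) % 4 = 2 := by omega
  simp [sg1, h]
lemma sg1_3 (p : ℕ) : sg1 (4*p+3) = -1 := by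
  have h : (4*p+3) % 4 = 3 := by omega
  simp [sg1, h]
lemma sg2_0 (p : ℕ) : sg2 (4*p) = 1 := by
  have h : (4*p) % 4 = 0 := by omega
  simp [sg2, h]
lemma sg2_1 (p : ℕ) : sg2 (4*p+1) = -1 := by
  have h : (4*p+1) % 4 = 1 := by omega
  simp [sg2, h]
lemma sg2_2 (p : ℕ) : sg2 (4*p+2) = 1 := by
  have h : (4*p+2) % 4 = 2 := by omega
  simp [sg2, h]
lemma sg2_3 (p : ℕ) : sg2 (4*p+3) = -1 := by
  have h : (4*p+3) % 4 = 3 := by omega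
  simp [sg2, h]

/-- extracting block `p` from the ReLU of a "gadget" pre-activation gives `min a b`. -/
lemma quad_min {N : ℕ} (p : ℕ) (hp : 4 * p + 3 < W N) (g : Fin (W N) → ℝ) (a b : ℝ)
    (hg : ∀ r : Fin (W N), (r : ℕ) / 4 = p → g r = sg1 r * a + sg2 r * b) :
    ∑ r, coefV N p r * reluVec g r = min a b := by
  rw [show (fun r => coefV N p r * reluVec g r) = fun r => coefV N p r * max 0 (g r) from rfl]
  rw [sum_coefV p hp]
  have e0 := hg ⟨4*p, by omega⟩ (by simp only [Fin.val_mk]; omega)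
  have e1 := hg ⟨4*p+1, by omega⟩ (by simp only [Fin.val_mk]; omega)
  have e2 := hg ⟨4*p+2, by omega⟩ (by simp only [Fin.val_mk]; omega)
  have e3 := hg ⟨4*p+3, by omega⟩ (by simp only [Fin.val_mk]; omega)
  simp only [Fin.val_mk] at e0 e1 e2 e3 ⊢
  rw [e0, e1, e2, e3, sg1_0, sg1_1, sg1_2, sg1_3, sg2_0, sg2_1, sg2_2, sg2_3]
  rw [show (1:ℝ)*a + 1*b = a + b by ring, show (1:ℝ)*a + (-1)*b = a - b by ring,
    show (-1:ℝ)*a + 1*b = -a + b by ring, show (-1:ℝ)*a + (-1)*b = -a - b by ring]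
  exact (min_relu a b).symm

lemma inW_row {N : ℕ} (hN : 2 ≤ N) (x : Fin N → ℝ) (r : Fin (W N)) :
    Matrix.mulVec (net N hN).inW x r
      = sg1 r * xe x (min (2 * ((r : ℕ) / 4)) (N - 1))
        + sg2 r * xe x (min (2 * ((r : ℕ) / 4) + 1) (N - 1)) := by
  have hA : min (2 * ((r : ℕ) / 4)) (N - 1) < N := by omega
  have hB : min (2 * ((r : ℕ) / 4) + 1) (N - 1) < N := by omega
  simp only [net, Matrix.mulVec, dotProduct, add_mul, mul_assoc]
  rw [Finset.sum_add_distrib, ← Finset.mul_sum, ← Finset.mul_sum,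
    sum_ind _ hA, sum_ind _ hB]
  rw [xe, xe, dif_pos hA, dif_pos hB]

lemma midW_row {N : ℕ} (hN : 2 ≤ N) (k : ℕ) (h : Fin (W N) → ℝ) (r : Fin (W N)) :
    Matrix.mulVec ((net N hN).midW k) h r
      = sg1 r * ∑ r', coefV N (min (2 * ((r : ℕ) / 4)) (mm N (k+1) - 1)) r' * h r'
        + sg2 r * ∑ r', coefV N (min (2 * ((r : ℕ) / 4) + 1) (mm N (k+1) - 1)) r' * h r' := by
  simp only [net, Matrix.mulVec, dotProduct, add_mul, mul_assoc]
  rw [Finset.sum_add_distrib, ← Finset.mul_sum, ← Finset.mul_sum]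
  rfl

lemma invariant {N : ℕ} (hN : 2 ≤ N) (x : Fin N → ℝ) :
    ∀ k p, 4 * p + 3 < W N →
      ∑ r, coefV N p r * (net N hN).hidden x k r = u N x (k+1) p := by
  intro k
  induction k with
  | zero =>
    intro p hp
    have step : (net N hN).hidden x 0
        = reluVec (Matrix.mulVec (net N hN).inW x + (net N hN).inB) := rfl
    rw [step]
    have : u N x 1 p
        = min (xe x (min (min (2*p) (N-1)) (N-1))) (xe x (min (min (2*p+1) (N-1)) (N-1))) := rfl
    rw [this, show min (min (2*p) (N-1)) (N-1) = min (2*p) (N-1) from by omega,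
      show min (min (2*p+1) (N-1)) (N-1) = min (2*p+1) (N-1) from by omega]
    apply quad_min p hp
    intro r hr
    have hB : (net N hN).inB r = 0 := rfl
    change Matrix.mulVec (net N hN).inW x r + (net N hN).inB r = _
    simp only [Pi.add_apply, hB, add_zero, inW_row hN x r, hr]
  | succ k ih =>
    intro p hp
    have h1N : 1 ≤ N := by omega
    have hPpos : 1 ≤ P N := by simp only [P]; omega
    have hmP : mm N (k + 1) ≤ P N := mm_le_P h1N k
    have hmpos : 1 ≤ mm N (k + 1) := mm_pos h1N (k+1)
    have step : (net N hN).hidden x (k+1)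
        = reluVec (Matrix.mulVec ((net N hN).midW k) ((net N hN).hidden x k)
            + (net N hN).midB k) := rfl
    rw [step]
    set A := min (2*p) (mm N (k+1) - 1) with hAdef
    set B := min (2*p+1) (mm N (k+1) - 1) with hBdef
    have hA : 4 * A + 3 < W N := by
      have : A < P N := by omega
      simp only [W]; omega
    have hB : 4 * B + 3 < W N := by
      have : B < P N := by omega
      simp only [W]; omega
    have hu : u N x (k+2) p = min (u N x (k+1) A) (u N x (k+1) B) := rfl
    rw [show k + 1 + 1 = k + 2 from rfl, hu]
    apply quad_min p hp
    intro r hr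
    have hb : (net N hN).midB k r = 0 := rfl
    change Matrix.mulVec ((net N hN).midW k) ((net N hN).hidden x k) r + (net N hN).midB k r = _
    simp only [Pi.add_apply, hb, add_zero, midW_row hN k _ r, hr, ← hAdef, ← hBdef,
      ih A hA, ih B hB]
    exact (midW_row hN k _ r).trans (by simp only [hr, ← hAdef, ← hBdef, ih A hA, ih B hB])

lemma div_lt_mm {N : ℕ} (h1 : 1 ≤ N) : ∀ k (i : ℕ), i < N → i / 2^k < mm N k := by
  intro k
  induction k with
  | zero => intro i hi; simpa [mm] using hi
  | succ k ih =>
    intro i hi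
    have h2 : i / 2^(k+1) = (i / 2^k) / 2 := by
      rw [pow_succ, Nat.div_div_eq_div_mul]
    have h3 := ih i hi
    have h4 := mm_pos h1 k
    have h5 : mm N (k+1) = (mm N k + 1) / 2 := rfl
    omega

lemma u_le {N : ℕ} (hN : 2 ≤ N) (x : Fin N → ℝ) :
    ∀ k (i : ℕ) (hi : i < N), u N x k (i / 2^k) ≤ x ⟨i, hi⟩ := by
  intro k
  induction k with
  | zero =>
    intro i hi
    simp only [pow_zero, Nat.div_one]
    have : u N x 0 i = xe x (min i (N-1)) := rfl
    rw [this, show min i (N-1) = i from by omega, xe, dif_pos hi]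
  | succ k ih =>
    intro i hi
    have h2 : i / 2^(k+1) = (i / 2^k) / 2 := by
      rw [pow_succ, Nat.div_div_eq_div_mul]
    have h3 : i / 2^k < mm N k := div_lt_mm (by omega) k i hi
    set q := i / 2^(k+1) with hq
    have hcase : i / 2^k = 2*q ∨ i / 2^k = 2*q + 1 := by omega
    have hu : u N x (k+1) q
        = min (u N x k (min (2*q) (mm N k - 1))) (u N x k (min (2*q+1) (mm N k - 1))) := rfl
    rcases hcase with hc | hc
    · have : min (2*q) (mm N k - 1) = i / 2^k := by omega
      rw [hu, this]
      exact le_trans (min_le_left _ _) (ih i hi)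
    · have : min (2*q+1) (mm N k - 1) = i / 2^k := by omega
      rw [hu, this]
      exact le_trans (min_le_right _ _) (ih i hi)

lemma inf_le_u {N : ℕ} (hN : 2 ≤ N) (x : Fin N → ℝ) (H : (Finset.univ : Finset (Fin N)).Nonempty) :
    ∀ k j, Finset.univ.inf' H x ≤ u N x k j := by
  intro k
  induction k with
  | zero =>
    intro j
    have hA : min j (N-1) < N := by omega
    have : u N x 0 j = x ⟨min j (N-1), hA⟩ := by
      show xe x (min j (N-1)) = _
      rw [xe, dif_pos hA]
    rw [this]
    exact Finset.inf'_le _ (Finset.mem_univ _)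
  | succ k ih =>
    intro j
    exact le_min (ih _) (ih _)

end MinRelu

/-- The minimum of `N ≥ 2` real numbers is exactly representable by a ReLU network of
depth at most `2⌈log₂ N⌉` and width at most `4⌈N/2⌉`. -/
theorem min_relu_network (N : ℕ) (hN : 2 ≤ N) :
    ∃ net : ReLUNet N,
      net.depth ≤ 2 * Nat.clog 2 N ∧ net.width ≤ 4 * ((N + 1) / 2) ∧
      ∀ x : Fin N → ℝ,
        net.eval x = Finset.univ.inf' ⟨⟨0, by omega⟩, Finset.mem_univ _⟩ x := by
  classical
  open MinRelu in
  refine ⟨MinRelu.net N hN, by simp [MinRelu.net]; omega, le_of_eq rfl, ?_⟩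
  intro x
  set H : (Finset.univ : Finset (Fin N)).Nonempty := ⟨⟨0, by omega⟩, Finset.mem_univ _⟩
  set K := Nat.clog 2 N with hK
  have hKpos : 1 ≤ K := Nat.clog_pos one_lt_two hN
  have hp0 : 4 * 0 + 3 < MinRelu.W N := by simp only [MinRelu.W, MinRelu.P]; omega
  have heval : (MinRelu.net N hN).eval x = MinRelu.u N x K 0 := by
    have hout : (MinRelu.net N hN).eval x
        = ∑ r, MinRelu.coefV N 0 r * (MinRelu.net N hN).hidden x (K - 1) r + 0 := rfl
    rw [hout, add_zero, MinRelu.invariant hN x (K - 1) 0 hp0,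
      show K - 1 + 1 = K from by omega]
  rw [heval]
  apply le_antisymm
  · obtain ⟨i, -, hi⟩ := Finset.exists_mem_eq_inf' H x
    rw [hi]
    have hiN : (i : ℕ) < N := i.isLt
    have hpow : N ≤ 2 ^ K := Nat.le_pow_clog one_lt_two N
    have h0 : (i : ℕ) / 2 ^ K = 0 := Nat.div_eq_of_lt (by omega)
    have := MinRelu.u_le hN x K i hiN
    rwa [h0, Fin.eta] at this
  · exact MinRelu.inf_le_u hN x H K 0
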